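/- arXiv:2109.03207 — 5 statements merged into one kernel-verified Lean document; each statement's English description precedes it below -/
import Mathlib

section
/- Let d be a positive integer, L > 0, and let x₁, x₂, g₁, g₂ ∈ ℝ^d. Suppose ‖g₁ − g₂‖² > L⟨g₁ − g₂, x₁ − x₂⟩. Set u = g₁ − g₂ − (L/2)(x₁ − x₂) (the hypothesis implies u ≠ 0). Then the unique minimizer of (θ₁, θ₂) ↦ ‖g₁ − θ₁‖² + ‖g₂ − θ₂‖² over the set {(θ₁, θ₂) ∈ ℝ^d × ℝ^d : (1/L)‖θ₁ − θ₂‖² ≤ ⟨θ₁ − θ₂, x₁ − x₂⟩} is given by θ̂₁ = (g₁ + g₂ + (L/2)(x₁ − x₂))/2 + (L‖x₁ − x₂‖/4)·(u/‖u‖) and θ̂₂ = (g₁ + g₂ − (L/2)(x₁ − x₂))/2 − (L‖x₁ − x₂‖/4)·(u/‖u‖). -/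
open scoped RealInnerProductSpace

set_option maxHeartbeats 1600000 in
/-- COCO₂, second case (Theorem 3.1): when the observed gradients violate
co-coercivity, the closed-form projection is the unique minimizer. -/
theorem coco2_active_case (d : ℕ) (hd : 0 < d) (L : ℝ) (hL : 0 < L)
    (x₁ x₂ g₁ g₂ u θh₁ θh₂ : EuclideanSpace ℝ (Fin d))
    (h : ‖g₁ - g₂‖ ^ 2 > L * ⟪g₁ - g₂, x₁ - x₂⟫)
    (hu : u = g₁ - g₂ - (L / 2) • (x₁ - x₂))
    (h1 : θh₁ = (2 : ℝ)⁻¹ • (g₁ + g₂ + (L / 2) • (x₁ - x₂))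
        + (L * ‖x₁ - x₂‖ / 4) • (‖u‖⁻¹ • u))
    (h2 : θh₂ = (2 : ℝ)⁻¹ • (g₁ + g₂ - (L / 2) • (x₁ - x₂))
        - (L * ‖x₁ - x₂‖ / 4) • (‖u‖⁻¹ • u)) :
    u ≠ 0 ∧
    ((1 / L) * ‖θh₁ - θh₂‖ ^ 2 ≤ ⟪θh₁ - θh₂, x₁ - x₂⟫) ∧
    ∀ θ₁ θ₂ : EuclideanSpace ℝ (Fin d),
      (1 / L) * ‖θ₁ - θ₂‖ ^ 2 ≤ ⟪θ₁ - θ₂, x₁ - x₂⟫ →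
      (θ₁, θ₂) ≠ (θh₁, θh₂) →
      ‖g₁ - θh₁‖ ^ 2 + ‖g₂ - θh₂‖ ^ 2 < ‖g₁ - θ₁‖ ^ 2 + ‖g₂ - θ₂‖ ^ 2 := by
  set δ := x₁ - x₂ with hδ
  set γ := g₁ - g₂ with hγ
  -- norm-squared of u
  have hu2 : ‖u‖ ^ 2 = ‖γ‖ ^ 2 - L * ⟪γ, δ⟫ + (L / 2) ^ 2 * ‖δ‖ ^ 2 := by
    rw [← real_inner_self_eq_norm_sq, ← real_inner_self_eq_norm_sq,
      ← real_inner_self_eq_norm_sq, hu]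
    simp only [inner_sub_left, inner_sub_right, real_inner_smul_left,
      real_inner_smul_right, real_inner_comm δ γ]
    ring
  have hnu : L / 2 * ‖δ‖ < ‖u‖ := by
    have h0 : (L / 2 * ‖δ‖) ^ 2 < ‖u‖ ^ 2 := by rw [hu2]; nlinarith [h]
    exact lt_of_pow_lt_pow_left₀ 2 (norm_nonneg u) h0
  have hupos : (0 : ℝ) < ‖u‖ := lt_of_le_of_lt (by positivity) hnu
  have hu0 : u ≠ 0 := by
    intro hz
    rw [hz, norm_zero] at hupos; exact lt_irrefl 0 hupos
  have hun : ‖u‖ ≠ 0 := ne_of_gt hupos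
  set e : EuclideanSpace ℝ (Fin d) := ‖u‖⁻¹ • u with he
  have hne1 : ‖e‖ = 1 := norm_smul_inv_norm hu0
  have hee : ⟪e, e⟫ = 1 := by
    rw [real_inner_self_eq_norm_sq, hne1]; norm_num
  have hue : u = ‖u‖ • e := by rw [he, smul_smul, mul_inv_cancel₀ hun, one_smul]
  have hγe : γ = ‖u‖ • e + (L / 2) • δ := by
    rw [← hue, hu]; abel
  -- the candidate difference
  have hw : θh₁ - θh₂ = (L / 2) • δ + (L * ‖δ‖ / 2) • e := by
    rw [h1, h2]; module
  refine ⟨hu0, ?_, ?_⟩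
  · -- feasibility (with equality)
    have hwn : ‖θh₁ - θh₂‖ ^ 2
        = (L / 2) ^ 2 * ‖δ‖ ^ 2 + 2 * (L / 2) * (L * ‖δ‖ / 2) * ⟪δ, e⟫
          + (L * ‖δ‖ / 2) ^ 2 := by
      rw [← real_inner_self_eq_norm_sq, ← real_inner_self_eq_norm_sq, hw]
      simp only [inner_add_left, inner_add_right, real_inner_smul_left,
        real_inner_smul_right, real_inner_comm e δ, hee]
      ring
    have hwδ : ⟪θh₁ - θh₂, δ⟫ = (L / 2) * ⟪δ, δ⟫ + (L * ‖δ‖ / 2) * ⟪e, δ⟫ := by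
      rw [hw]
      simp only [inner_add_left, real_inner_smul_left]
    rw [hwn, hwδ, real_inner_self_eq_norm_sq, real_inner_comm e δ]
    have hLne : L ≠ 0 := ne_of_gt hL
    set B : ℝ := ⟪δ, e⟫ with hB
    apply le_of_eq
    field_simp
    ring
  · -- optimality
    intro θ₁ θ₂ hfeas hne
    have hc : (0 : ℝ) < ‖u‖ / 2 - L * ‖δ‖ / 4 := by linarith
    set c : ℝ := ‖u‖ / 2 - L * ‖δ‖ / 4 with hcdef
    have e1 : g₁ - θh₁ = c • e := by
      rw [h1, hcdef, sub_smul]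
      have hg : g₁ = g₂ + (‖u‖ • e + (L / 2) • δ) := by
        have : g₁ - g₂ = ‖u‖ • e + (L / 2) • δ := by rw [← hγ]; exact hγe
        rw [← this]; abel
      rw [hg]; module
    have e2 : g₂ - θh₂ = -(c • e) := by
      rw [h2, hcdef, sub_smul]
      have hg : g₂ = g₁ - (‖u‖ • e + (L / 2) • δ) := by
        have : g₁ - g₂ = ‖u‖ • e + (L / 2) • δ := by rw [← hγ]; exact hγe
        rw [← this]; abel
      rw [hg]; module
    -- expansion identities
    have exp1 : ‖g₁ - θ₁‖ ^ 2
        = ‖g₁ - θh₁‖ ^ 2 + 2 * ⟪g₁ - θh₁, θh₁ - θ₁⟫ + ‖θh₁ - θ₁‖ ^ 2 := by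
      have hsplit : g₁ - θ₁ = (g₁ - θh₁) + (θh₁ - θ₁) := by abel
      rw [hsplit, norm_add_sq_real]
    have exp2 : ‖g₂ - θ₂‖ ^ 2
        = ‖g₂ - θh₂‖ ^ 2 + 2 * ⟪g₂ - θh₂, θh₂ - θ₂⟫ + ‖θh₂ - θ₂‖ ^ 2 := by
      have hsplit : g₂ - θ₂ = (g₂ - θh₂) + (θh₂ - θ₂) := by abel
      rw [hsplit, norm_add_sq_real]
    -- the cross term is nonnegative
    set v := θ₁ - θ₂ with hv
    have hball : ‖v - (L / 2) • δ‖ ≤ L / 2 * ‖δ‖ := by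
      have hfeas' : ‖v‖ ^ 2 ≤ L * ⟪v, δ⟫ := by
        have := mul_le_mul_of_nonneg_left hfeas (le_of_lt hL)
        have hLne : L ≠ 0 := ne_of_gt hL
        calc ‖v‖ ^ 2 = L * (1 / L * ‖v‖ ^ 2) := by field_simp
          _ ≤ L * ⟪v, δ⟫ := this
      have hsq : ‖v - (L / 2) • δ‖ ^ 2 ≤ (L / 2 * ‖δ‖) ^ 2 := by
        rw [← real_inner_self_eq_norm_sq]
        simp only [inner_sub_left, inner_sub_right, real_inner_smul_left,
          real_inner_smul_right, real_inner_comm δ v]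
        rw [real_inner_self_eq_norm_sq v, real_inner_self_eq_norm_sq δ]
        nlinarith [hfeas', real_inner_comm δ v]
      exact le_of_pow_le_pow_left₀ (by norm_num) (by positivity) hsq
    have hcs : ⟪e, v - (L / 2) • δ⟫ ≤ ‖v - (L / 2) • δ‖ := by
      have := real_inner_le_norm e (v - (L / 2) • δ)
      rwa [hne1, one_mul] at this
    have hev : ⟪e, v⟫ ≤ L / 2 * ⟪e, δ⟫ + L / 2 * ‖δ‖ := by
      have : ⟪e, v⟫ = ⟪e, v - (L / 2) • δ⟫ + L / 2 * ⟪e, δ⟫ := by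
        simp only [inner_sub_right, real_inner_smul_right]; ring
      rw [this]; linarith
    have hew : ⟪e, θh₁ - θh₂⟫ = L / 2 * ⟪e, δ⟫ + L * ‖δ‖ / 2 := by
      rw [hw]
      simp only [inner_add_right, real_inner_smul_right, hee]
      ring
    have hcross : 0 ≤ ⟪g₁ - θh₁, θh₁ - θ₁⟫ + ⟪g₂ - θh₂, θh₂ - θ₂⟫ := by
      have hrw : ⟪g₁ - θh₁, θh₁ - θ₁⟫ + ⟪g₂ - θh₂, θh₂ - θ₂⟫
          = c * (⟪e, θh₁ - θh₂⟫ - ⟪e, v⟫) := by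
        rw [e1, e2]
        simp only [inner_neg_left, real_inner_smul_left, inner_sub_right, hv]
        ring
      rw [hrw]
      have : ⟪e, v⟫ ≤ ⟪e, θh₁ - θh₂⟫ := by rw [hew]; linarith
      have h2' : 0 ≤ ⟪e, θh₁ - θh₂⟫ - ⟪e, v⟫ := by linarith
      positivity
    -- quadratic term is positive
    have hquad : 0 < ‖θh₁ - θ₁‖ ^ 2 + ‖θh₂ - θ₂‖ ^ 2 := by
      rcases (not_and_or.mp (fun hand => hne (Prod.ext hand.1 hand.2))) with h' | h'
      · have : θh₁ - θ₁ ≠ 0 := sub_ne_zero.mpr (Ne.symm h')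
        have hp : 0 < ‖θh₁ - θ₁‖ := norm_pos_iff.mpr this
        nlinarith [sq_nonneg ‖θh₂ - θ₂‖, sq_nonneg ‖θh₁ - θ₁‖, norm_nonneg (θh₂ - θ₂)]
      · have : θh₂ - θ₂ ≠ 0 := sub_ne_zero.mpr (Ne.symm h')
        have hp : 0 < ‖θh₂ - θ₂‖ := norm_pos_iff.mpr this
        nlinarith [sq_nonneg ‖θh₁ - θ₁‖]
    linarith [exp1, exp2, hcross, hquad]
end

section
/- Let d, K be positive integers, L > 0, x₁, …, x_K, g₁, …, g_K ∈ ℝ^d, and let M be a symmetric positive definite d×d real matrix. Let Θ be the COCO feasible set determined by L and x₁, …, x_K. If θ̂ = (θ̂₁, …, θ̂_K) ∈ Θ minimizes the function θ ↦ Σ_{k=1}^K (g_k − θ_k)ᵀ M (g_k − θ_k) over Θ, then Σ_{k=1}^K θ̂_k = Σ_{k=1}^K g_k; that is, the estimated gradients and the raw observations have the same centroid. -/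
open scoped RealInnerProductSpace

/-- Theorem 4.1: the COCO estimates and the raw observations have the same centroid,
for a generic symmetric positive definite weighting matrix `M`. -/
theorem coco_centroid_preserved (d K : ℕ) (hd : 0 < d) (hK : 0 < K)
    (L : ℝ) (hL : 0 < L)
    (x g θh : Fin K → EuclideanSpace ℝ (Fin d))
    (M : Matrix (Fin d) (Fin d) ℝ) (hMsymm : M.IsSymm) (hMpd : M.PosDef)
    (Θ : Set (Fin K → EuclideanSpace ℝ (Fin d)))
    (hΘ : Θ = {θ | ∀ m l : Fin K, m < l →
      (1 / L) * ‖θ m - θ l‖ ^ 2 ≤ ⟪θ m - θ l, x m - x l⟫})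
    (hmem : θh ∈ Θ)
    (hmin : ∀ θ ∈ Θ,
      (∑ k, ⟪g k - θh k, Matrix.toEuclideanLin M (g k - θh k)⟫)
        ≤ ∑ k, ⟪g k - θ k, Matrix.toEuclideanLin M (g k - θ k)⟫) :
    ∑ k, θh k = ∑ k, g k := by
  classical
  set T := Matrix.toEuclideanLin M with hT
  set a : Fin K → EuclideanSpace ℝ (Fin d) := fun k => g k - θh k with ha
  set u : EuclideanSpace ℝ (Fin d) := ∑ k, a k with hu
  have hsymm : ∀ v w : EuclideanSpace ℝ (Fin d), ⟪T v, w⟫ = ⟪v, T w⟫ :=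
    Matrix.isHermitian_iff_isSymmetric.mp hMpd.isHermitian
  set c : ℝ := 1 / K with hc
  -- the translated point is feasible
  have hmemt : (fun k => θh k + c • u) ∈ Θ := by
    rw [hΘ] at hmem ⊢
    intro m l hml
    have h : (θh m + c • u) - (θh l + c • u) = θh m - θh l := by abel
    simpa [h] using hmem m l hml
  have key := hmin _ hmemt
  -- expand a single term
  have expand : ∀ v : EuclideanSpace ℝ (Fin d),
      ⟪v - c • u, T (v - c • u)⟫ = ⟪v, T v⟫ - 2 * c * ⟪v, T u⟫ + c ^ 2 * ⟪u, T u⟫ := by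
    intro v
    have h1 : ⟪u, T v⟫ = ⟪v, T u⟫ := by rw [← hsymm u v, real_inner_comm]
    simp only [map_sub, map_smul, inner_sub_left, inner_sub_right,
      inner_smul_left, inner_smul_right, RCLike.conj_to_real, h1]
    ring
  have hterm : ∀ k, g k - (θh k + c • u) = a k - c • u := by
    intro k; simp only [ha]; abel
  have hsum : ∑ k, ⟪g k - (θh k + c • u), T (g k - (θh k + c • u))⟫
      = (∑ k, ⟪a k, T (a k)⟫) - 2 * c * ⟪u, T u⟫ + (K : ℝ) * (c ^ 2 * ⟪u, T u⟫) := by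
    have h2 : ∑ k, ⟪a k, T u⟫ = ⟪u, T u⟫ := by rw [hu, sum_inner]
    calc ∑ k, ⟪g k - (θh k + c • u), T (g k - (θh k + c • u))⟫
        = ∑ k, (⟪a k, T (a k)⟫ - 2 * c * ⟪a k, T u⟫ + c ^ 2 * ⟪u, T u⟫) := by
          refine Finset.sum_congr rfl fun k _ => ?_
          rw [hterm k, expand (a k)]
      _ = (∑ k, ⟪a k, T (a k)⟫) - 2 * c * (∑ k, ⟪a k, T u⟫)
            + (K : ℝ) * (c ^ 2 * ⟪u, T u⟫) := by
          rw [Finset.sum_add_distrib, Finset.sum_sub_distrib, ← Finset.mul_sum]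
          simp [Finset.sum_const, Finset.card_univ]
      _ = _ := by rw [h2]
  rw [hsum] at key
  have hKne : (K : ℝ) ≠ 0 := Nat.cast_ne_zero.mpr hK.ne'
  have hcK : (K : ℝ) * c ^ 2 = c := by rw [hc]; field_simp
  have hle : ⟪u, T u⟫ ≤ 0 := by
    have hcpos : 0 < c := by positivity
    nlinarith [key, hcK]
  have hu0 : u = 0 := by
    by_contra h
    have hpos : 0 < ⟪u, T u⟫ := by
      have := hMpd.dotProduct_mulVec_pos (x := WithLp.ofLp u) (by simpa using h)
      simpa [hT, PiLp.inner_apply, Matrix.toEuclideanLin_apply, dotProduct,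
        mul_comm] using this
    linarith
  have : ∑ k, g k - ∑ k, θh k = 0 := by
    rw [← Finset.sum_sub_distrib]; exact hu0
  have h := sub_eq_zero.mp this
  exact h.symm
end

section
/- Let d, K be positive integers, L > 0, and let f : ℝ^d → ℝ be a convex differentiable function whose gradient is L-Lipschitz. Let x₁, …, x_K ∈ ℝ^d, let Θ be the COCO feasible set determined by L and x₁, …, x_K, and let ∇f = (∇f(x₁), …, ∇f(x_K)) ∈ (ℝ^d)^K. Let g = (g₁, …, g_K) ∈ (ℝ^d)^K be arbitrary, and let θ̂ ∈ Θ satisfy Σ_{k=1}^K ‖g_k − θ̂_k‖² ≤ Σ_{k=1}^K ‖g_k − θ_k‖² for all θ ∈ Θ. Then Σ_{k=1}^K ‖θ̂_k − ∇f(x_k)‖² ≤ Σ_{k=1}^K ‖g_k − ∇f(x_k)‖². -/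
open scoped RealInnerProductSpace

section Aux
set_option linter.unusedSectionVars false

variable {E : Type*} [NormedAddCommGroup E] [InnerProductSpace ℝ E] [CompleteSpace E]

private lemma coco_lineMap_hasDerivAt (x y : E) (t : ℝ) :
    HasDerivAt (fun s : ℝ => AffineMap.lineMap x y s) (y - x) t := by
  have h : HasDerivAt (fun s : ℝ => s • (y - x) + x) ((1:ℝ) • (y - x)) t :=
    ((hasDerivAt_id t).smul_const (y - x)).add_const x
  simpa [AffineMap.lineMap_apply, one_smul] using h

private lemma coco_comp_hasDerivAt {f : E → ℝ} (hdiff : Differentiable ℝ f) (x y : E) (t : ℝ) :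
    HasDerivAt (fun s : ℝ => f (AffineMap.lineMap x y s))
      ⟪gradient f (AffineMap.lineMap x y t), y - x⟫ t := by
  have hg := (hdiff (AffineMap.lineMap x y t)).hasGradientAt
  have hf := (hasGradientAt_iff_hasFDerivAt.mp hg)
  have := hf.comp_hasDerivAt t (coco_lineMap_hasDerivAt x y t)
  simpa [InnerProductSpace.toDual_apply_apply, Function.comp_def] using this

/-- First-order condition for a convex differentiable function. -/
private lemma coco_grad_ineq {f : E → ℝ} (hconv : ConvexOn ℝ Set.univ f)
    (hdiff : Differentiable ℝ f) (x y : E) :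
    f x + ⟪gradient f x, y - x⟫ ≤ f y := by
  set g : ℝ → ℝ := fun s => f (AffineMap.lineMap x y s) with hg
  have hgc : ConvexOn ℝ Set.univ g := by
    have := hconv.comp_affineMap (AffineMap.lineMap x y)
    simpa [Set.preimage_univ, Function.comp_def] using this
  have hder := coco_comp_hasDerivAt hdiff x y 0
  have := hgc.le_slope_of_hasDerivAt (Set.mem_univ (0:ℝ)) (Set.mem_univ (1:ℝ))
      one_pos (by simpa only [AffineMap.lineMap_apply_zero] using hder)
  have hslope : slope g 0 1 = g 1 - g 0 := by simp [slope_def_field]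
  rw [hslope] at this
  have h0 : g 0 = f x := by simp [hg]
  have h1 : g 1 = f y := by simp [hg]
  rw [h0, h1] at this
  linarith

/-- Descent lemma for a function with `L`-Lipschitz gradient. -/
private lemma coco_descent {f : E → ℝ} {L : ℝ} (hL : 0 < L) (hdiff : Differentiable ℝ f)
    (hlip : ∀ a b : E, ‖gradient f a - gradient f b‖ ≤ L * ‖a - b‖) (x y : E) :
    f y ≤ f x + ⟪gradient f x, y - x⟫ + L / 2 * ‖y - x‖ ^ 2 := by
  have hder := coco_comp_hasDerivAt hdiff x y
  set g : ℝ → ℝ := fun s => f (AffineMap.lineMap x y s) with hg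
  set g' : ℝ → ℝ := fun t => ⟪gradient f (AffineMap.lineMap x y t), y - x⟫ with hg'
  have hgradcont : Continuous (gradient f) := by
    have : LipschitzWith (Real.toNNReal L) (gradient f) := by
      apply LipschitzWith.of_dist_le_mul
      intro a b
      rw [dist_eq_norm, dist_eq_norm]
      simpa [Real.coe_toNNReal _ hL.le] using hlip a b
    exact this.continuous
  have hcont : Continuous g' := by
    apply Continuous.inner
    · exact hgradcont.comp AffineMap.lineMap_continuous
    · exact continuous_const
  have hint : IntervalIntegrable g' MeasureTheory.volume 0 1 := hcont.intervalIntegrable 0 1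
  have heq : ∫ t in (0:ℝ)..1, g' t = g 1 - g 0 :=
    intervalIntegral.integral_eq_sub_of_hasDerivAt (fun t _ => hder t) hint
  have hbound : ∀ t ∈ Set.Icc (0:ℝ) 1, g' t ≤ g' 0 + (L * ‖y - x‖ ^ 2) * t := by
    intro t ht
    have h1 : g' t - g' 0 = ⟪gradient f (AffineMap.lineMap x y t) - gradient f x, y - x⟫ := by
      simp [hg', inner_sub_left]
    have h2 : ⟪gradient f (AffineMap.lineMap x y t) - gradient f x, y - x⟫
        ≤ ‖gradient f (AffineMap.lineMap x y t) - gradient f x‖ * ‖y - x‖ :=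
      real_inner_le_norm _ _
    have h3 : ‖gradient f (AffineMap.lineMap x y t) - gradient f x‖ ≤ L * (t * ‖y - x‖) := by
      have := hlip (AffineMap.lineMap x y t) x
      have he : AffineMap.lineMap x y t - x = t • (y - x) := by
        simp [AffineMap.lineMap_apply]
      rw [he, norm_smul, Real.norm_eq_abs, abs_of_nonneg ht.1] at this
      exact this
    nlinarith [norm_nonneg (y - x), ht.1]
  have hintrhs : IntervalIntegrable (fun t => g' 0 + (L * ‖y - x‖ ^ 2) * t)
      MeasureTheory.volume 0 1 :=
    (by fun_prop : Continuous fun t : ℝ => g' 0 + (L * ‖y - x‖ ^ 2) * t).intervalIntegrable 0 1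
  have hmono : ∫ t in (0:ℝ)..1, g' t ≤ ∫ t in (0:ℝ)..1, (g' 0 + (L * ‖y - x‖ ^ 2) * t) :=
    intervalIntegral.integral_mono_on zero_le_one hint hintrhs hbound
  have hrhs : ∫ t in (0:ℝ)..1, (g' 0 + (L * ‖y - x‖ ^ 2) * t) = g' 0 + L / 2 * ‖y - x‖ ^ 2 := by
    rw [intervalIntegral.integral_add (intervalIntegrable_const)
      ((by fun_prop : Continuous fun t : ℝ => (L * ‖y - x‖ ^ 2) * t).intervalIntegrable 0 1)]
    rw [intervalIntegral.integral_const, intervalIntegral.integral_const_mul, integral_id]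
    norm_num
    ring
  have h0 : g 0 = f x := by simp [hg]
  have h1 : g 1 = f y := by simp [hg]
  have hg'0 : g' 0 = ⟪gradient f x, y - x⟫ := by simp [hg']
  rw [heq, h0, h1] at hmono
  rw [hrhs, hg'0] at hmono
  linarith

/-- One-sided strengthened first-order bound. -/
private lemma coco_key {f : E → ℝ} {L : ℝ} (hL : 0 < L)
    (hconv : ConvexOn ℝ Set.univ f) (hdiff : Differentiable ℝ f)
    (hlip : ∀ a b : E, ‖gradient f a - gradient f b‖ ≤ L * ‖a - b‖) (x y : E) :
    f x + ⟪gradient f x, y - x⟫ + 1 / (2 * L) * ‖gradient f y - gradient f x‖ ^ 2 ≤ f y := by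
  set w : E := gradient f y - gradient f x with hw
  set y' : E := y - (1 / L) • w with hy'
  have h1 := coco_grad_ineq hconv hdiff x y'
  have h2 := coco_descent hL hdiff hlip y y'
  have e1 : y' - y = -((1 / L) • w) := by simp [hy']
  have e2 : y' - x = (y - x) - (1 / L) • w := by simp [hy']; abel
  have i1 : ⟪gradient f y, y' - y⟫ = -(1 / L) * ⟪gradient f y, w⟫ := by
    rw [e1, inner_neg_right, real_inner_smul_right]; ring
  have i2 : ⟪gradient f x, y' - x⟫
      = ⟪gradient f x, y - x⟫ - (1 / L) * ⟪gradient f x, w⟫ := by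
    rw [e2, inner_sub_right, real_inner_smul_right]
  have i3 : ‖y' - y‖ ^ 2 = (1 / L) ^ 2 * ‖w‖ ^ 2 := by
    rw [e1, norm_neg, norm_smul, mul_pow, Real.norm_eq_abs, sq_abs]
  have i4 : ⟪gradient f y, w⟫ - ⟪gradient f x, w⟫ = ‖w‖ ^ 2 := by
    rw [← inner_sub_left, ← hw, real_inner_self_eq_norm_sq]
  rw [i1, i3] at h2
  rw [i2] at h1
  have hL' : L ≠ 0 := hL.ne'
  have hc : L / 2 * ((1 / L) ^ 2 * ‖w‖ ^ 2) = 1 / (2 * L) * ‖w‖ ^ 2 := by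
    field_simp
  rw [hc] at h2
  have i4' : 1 / L * ⟪gradient f y, w⟫ - 1 / L * ⟪gradient f x, w⟫ = 1 / L * ‖w‖ ^ 2 := by
    rw [← mul_sub, i4]
  have hsplit : 1 / L * ‖w‖ ^ 2 = 1 / (2 * L) * ‖w‖ ^ 2 + 1 / (2 * L) * ‖w‖ ^ 2 := by
    field_simp; ring
  linarith

/-- Co-coercivity (Baillon–Haddad) with sharp constant `1/L`. -/
private lemma coco_cocoercive {f : E → ℝ} {L : ℝ} (hL : 0 < L)
    (hconv : ConvexOn ℝ Set.univ f) (hdiff : Differentiable ℝ f)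
    (hlip : ∀ a b : E, ‖gradient f a - gradient f b‖ ≤ L * ‖a - b‖) (x y : E) :
    (1 / L) * ‖gradient f x - gradient f y‖ ^ 2 ≤ ⟪gradient f x - gradient f y, x - y⟫ := by
  have h1 := coco_key hL hconv hdiff hlip x y
  have h2 := coco_key hL hconv hdiff hlip y x
  have e1 : ‖gradient f y - gradient f x‖ = ‖gradient f x - gradient f y‖ := norm_sub_rev _ _
  have e2 : ⟪gradient f x - gradient f y, x - y⟫
      = ⟪gradient f x, x - y⟫ - ⟪gradient f y, x - y⟫ := inner_sub_left _ _ _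
  have e3 : ⟪gradient f x, y - x⟫ = -⟪gradient f x, x - y⟫ := by
    rw [← inner_neg_right]; congr 1; abel
  have e4 : ⟪gradient f y, x - y⟫ = -⟪gradient f y, y - x⟫ := by
    rw [← inner_neg_right]; congr 1; abel
  rw [e1] at h1
  have hhalf : 1 / (2 * L) * ‖gradient f x - gradient f y‖ ^ 2
      + 1 / (2 * L) * ‖gradient f x - gradient f y‖ ^ 2
      = 1 / L * ‖gradient f x - gradient f y‖ ^ 2 := by
    field_simp; ring
  linarith
end Aux

open scoped RealInnerProductSpace

set_option maxHeartbeats 1000000 in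
/-- Theorem 4.2 (deterministic core): the COCO estimate, being the projection of the
raw observations onto the feasible set, is at least as close to the true gradients
as the raw observations are. -/
theorem coco_total_error_le_oracle (d K : ℕ) (hd : 0 < d) (hK : 0 < K)
    (L : ℝ) (hL : 0 < L)
    (f : EuclideanSpace ℝ (Fin d) → ℝ)
    (hconv : ConvexOn ℝ Set.univ f)
    (hdiff : Differentiable ℝ f)
    (hlip : ∀ x y : EuclideanSpace ℝ (Fin d),
      ‖gradient f x - gradient f y‖ ≤ L * ‖x - y‖)
    (x : Fin K → EuclideanSpace ℝ (Fin d))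
    (Θ : Set (Fin K → EuclideanSpace ℝ (Fin d)))
    (hΘ : Θ = {θ | ∀ m l : Fin K, m < l →
      (1 / L) * ‖θ m - θ l‖ ^ 2 ≤ ⟪θ m - θ l, x m - x l⟫})
    (g θh : Fin K → EuclideanSpace ℝ (Fin d))
    (hmem : θh ∈ Θ)
    (hmin : ∀ θ ∈ Θ, ∑ k, ‖g k - θh k‖ ^ 2 ≤ ∑ k, ‖g k - θ k‖ ^ 2) :
    ∑ k, ‖θh k - gradient f (x k)‖ ^ 2 ≤ ∑ k, ‖g k - gradient f (x k)‖ ^ 2 := by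
  subst hΘ
  set φ : Fin K → EuclideanSpace ℝ (Fin d) := fun k => gradient f (x k) with hφdef
  -- the true gradients are feasible
  have hφ : ∀ m l : Fin K, m < l →
      (1 / L) * ‖φ m - φ l‖ ^ 2 ≤ ⟪φ m - φ l, x m - x l⟫ := by
    intro m l _
    simp only [hφdef]
    exact coco_cocoercive hL hconv hdiff hlip (x m) (x l)
  set u : Fin K → EuclideanSpace ℝ (Fin d) := fun k => g k - θh k with hu
  set v : Fin K → EuclideanSpace ℝ (Fin d) := fun k => φ k - θh k with hv
  set S : ℝ := ∑ k, ⟪u k, v k⟫ with hS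
  set V : ℝ := ∑ k, ‖v k‖ ^ 2 with hV
  -- variational inequality via convex combinations
  have key : ∀ t : ℝ, 0 ≤ t → t ≤ 1 → 2 * t * S ≤ t ^ 2 * V := by
    intro t ht0 ht1
    have hmemt : (fun k => θh k + t • v k) ∈ {θ : Fin K → EuclideanSpace ℝ (Fin d) | ∀ m l : Fin K, m < l →
        (1 / L) * ‖θ m - θ l‖ ^ 2 ≤ ⟪θ m - θ l, x m - x l⟫} := by
      intro m l hml
      have ha := hmem m l hml
      have hb := hφ m l hml
      set a : EuclideanSpace ℝ (Fin d) := θh m - θh l with hadef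
      set b : EuclideanSpace ℝ (Fin d) := φ m - φ l with hbdef
      set c : EuclideanSpace ℝ (Fin d) := x m - x l with hcdef
      have e : (θh m + t • v m) - (θh l + t • v l) = (1 - t) • a + t • b := by
        simp only [hv, hadef, hbdef]
        module
      rw [e]
      have hin : ⟪(1 - t) • a + t • b, c⟫ = (1 - t) * ⟪a, c⟫ + t * ⟪b, c⟫ := by
        rw [inner_add_left, real_inner_smul_left, real_inner_smul_left]
      rw [hin]
      have hn : ‖(1 - t) • a + t • b‖ ≤ (1 - t) * ‖a‖ + t * ‖b‖ := by
        calc ‖(1 - t) • a + t • b‖ ≤ ‖(1 - t) • a‖ + ‖t • b‖ := norm_add_le _ _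
        _ = (1 - t) * ‖a‖ + t * ‖b‖ := by
            rw [norm_smul, norm_smul, Real.norm_eq_abs, Real.norm_eq_abs,
              abs_of_nonneg (by linarith), abs_of_nonneg ht0]
      have hn2 : ‖(1 - t) • a + t • b‖ ^ 2 ≤ (1 - t) * ‖a‖ ^ 2 + t * ‖b‖ ^ 2 := by
        nlinarith [norm_nonneg ((1 - t) • a + t • b), norm_nonneg a, norm_nonneg b,
          sq_nonneg (‖a‖ - ‖b‖), mul_nonneg ht0 (by linarith : (0:ℝ) ≤ 1 - t)]
      have hLpos : (0:ℝ) < 1 / L := by positivity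
      have h1t : (0:ℝ) ≤ 1 - t := by linarith
      nlinarith [mul_le_mul_of_nonneg_left hn2 hLpos.le,
        mul_le_mul_of_nonneg_left ha h1t, mul_le_mul_of_nonneg_left hb ht0]
    have hle := hmin _ hmemt
    have expand : ∀ k : Fin K, ‖g k - (θh k + t • v k)‖ ^ 2
        = ‖u k‖ ^ 2 - 2 * t * ⟪u k, v k⟫ + t ^ 2 * ‖v k‖ ^ 2 := by
      intro k
      have e : g k - (θh k + t • v k) = u k - t • v k := by simp only [hu]; abel
      rw [e, norm_sub_sq_real, real_inner_smul_right, norm_smul, Real.norm_eq_abs,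
        mul_pow, sq_abs]
      ring
    rw [Finset.sum_congr rfl (fun k _ => expand k)] at hle
    rw [Finset.sum_add_distrib, Finset.sum_sub_distrib, ← Finset.mul_sum, ← Finset.mul_sum]
      at hle
    simp only [← hS, ← hV, ← hu] at hle
    linarith
  have hS0 : S ≤ 0 := by
    by_contra h
    push_neg at h
    have h1 := key 1 zero_le_one le_rfl
    have hVpos : 0 < V := by nlinarith
    have ht0 : 0 < S / V := div_pos h hVpos
    have ht1 : S / V ≤ 1 := by
      rw [div_le_one hVpos]; nlinarith
    have h2 := key (S / V) ht0.le ht1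
    have hεV : S / V * V = S := div_mul_cancel₀ _ hVpos.ne'
    have h3 : (S / V) ^ 2 * V = (S / V) * S := by
      rw [sq, mul_assoc, hεV]
    rw [h3] at h2
    nlinarith [mul_pos ht0 h]
  -- conclude
  have expand2 : ∀ k : Fin K, ‖g k - φ k‖ ^ 2
      = ‖u k‖ ^ 2 - 2 * ⟪u k, v k⟫ + ‖v k‖ ^ 2 := by
    intro k
    have e : g k - φ k = u k - v k := by simp only [hu, hv]; abel
    rw [e, norm_sub_sq_real]
  have expand3 : ∀ k : Fin K, ‖θh k - φ k‖ ^ 2 = ‖v k‖ ^ 2 := by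
    intro k
    rw [show θh k - φ k = -(v k) by simp only [hv]; abel, norm_neg]
  calc ∑ k, ‖θh k - φ k‖ ^ 2 = ∑ k, ‖v k‖ ^ 2 :=
        Finset.sum_congr rfl (fun k _ => expand3 k)
    _ ≤ ∑ k, (‖u k‖ ^ 2 - 2 * ⟪u k, v k⟫ + ‖v k‖ ^ 2) := by
        rw [Finset.sum_add_distrib, Finset.sum_sub_distrib, ← Finset.mul_sum, ← hS]
        have : (0:ℝ) ≤ ∑ k, ‖u k‖ ^ 2 := Finset.sum_nonneg fun k _ => sq_nonneg _
        linarith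
    _ = ∑ k, ‖g k - φ k‖ ^ 2 := (Finset.sum_congr rfl (fun k _ => (expand2 k))).symm
end

section
/- Let d be a positive integer, L > 0, and x₁, x₂, g₁, g₂ ∈ ℝ^d with ‖g₁ − g₂‖² > L⟨g₁ − g₂, x₁ − x₂⟩. Set u = g₁ − g₂ − (L/2)(x₁ − x₂) (which is nonzero under the hypothesis), θ̂₁ = (g₁ + g₂ + (L/2)(x₁ − x₂))/2 + (L‖x₁ − x₂‖/4)·(u/‖u‖) and θ̂₂ = (g₁ + g₂ − (L/2)(x₁ − x₂))/2 − (L‖x₁ − x₂‖/4)·(u/‖u‖). Then (i) θ̂₁ + θ̂₂ = g₁ + g₂, and (ii) the co-coercivity constraint holds with equality: ‖θ̂₁ − θ̂₂‖² = L⟨θ̂₁ − θ̂₂, x₁ − x₂⟩. -/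
open scoped RealInnerProductSpace

/-- Verification facts for the closed-form COCO₂ solution in the active case:
the sum of the estimates equals the sum of the observations, and the
co-coercivity constraint holds with equality. -/
theorem coco2_active_case_facts (d : ℕ) (hd : 0 < d) (L : ℝ) (hL : 0 < L)
    (x₁ x₂ g₁ g₂ u θh₁ θh₂ : EuclideanSpace ℝ (Fin d))
    (h : ‖g₁ - g₂‖ ^ 2 > L * ⟪g₁ - g₂, x₁ - x₂⟫)
    (hu : u = g₁ - g₂ - (L / 2) • (x₁ - x₂))
    (h1 : θh₁ = (2 : ℝ)⁻¹ • (g₁ + g₂ + (L / 2) • (x₁ - x₂))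
        + (L * ‖x₁ - x₂‖ / 4) • (‖u‖⁻¹ • u))
    (h2 : θh₂ = (2 : ℝ)⁻¹ • (g₁ + g₂ - (L / 2) • (x₁ - x₂))
        - (L * ‖x₁ - x₂‖ / 4) • (‖u‖⁻¹ • u)) :
    θh₁ + θh₂ = g₁ + g₂ ∧
    ‖θh₁ - θh₂‖ ^ 2 = L * ⟪θh₁ - θh₂, x₁ - x₂⟫ := by
  have hune : u ≠ 0 := by
    intro h0
    rw [h0] at hu
    have hg : g₁ - g₂ = (L / 2) • (x₁ - x₂) := by
      have := hu.symm
      rwa [sub_eq_zero] at this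
    rw [hg, norm_smul, real_inner_smul_left, real_inner_self_eq_norm_sq] at h
    rw [Real.norm_eq_abs, abs_of_pos (by linarith : (0:ℝ) < L / 2)] at h
    nlinarith [sq_nonneg ‖x₁ - x₂‖]
  set w : EuclideanSpace ℝ (Fin d) := ‖u‖⁻¹ • u with hwdef
  have hw : ‖w‖ = 1 := norm_smul_inv_norm hune
  have hD : θh₁ - θh₂ = (L / 2) • (x₁ - x₂) + (L * ‖x₁ - x₂‖ / 2) • w := by
    rw [h1, h2]; module
  constructor
  · rw [h1, h2]; module
  · rw [hD, ← real_inner_self_eq_norm_sq]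
    simp only [inner_add_left, inner_add_right, real_inner_smul_left,
      real_inner_smul_right, real_inner_self_eq_norm_sq, hw, norm_smul,
      Real.norm_eq_abs, mul_pow, sq_abs]
    rw [real_inner_comm w (x₁ - x₂)]
    ring
end

section
/- Let H be a finite-dimensional real inner product space, let s, c ∈ H, r ≥ 0 and μ > 0, and define q*(u) = r‖u‖ − ⟨u, c⟩. Let v be the metric projection of c + s/μ onto the closed ball {x ∈ H : ‖x‖ ≤ r}, i.e., v = c + s/μ if ‖c + s/μ‖ ≤ r and v = r(c + s/μ)/‖c + s/μ‖ otherwise. Then the unique minimizer of u ↦ (1/2)‖u − s‖² + μ q*(u) over H is u* = s − μ(v − c); that is, prox_{μq*}(s) = s − μ(v_proj − c). -/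
open scoped RealInnerProductSpace

/-- Closed-form proximity operator for `q*(u) = r‖u‖ - ⟨u, c⟩`:
`prox_{μ q*}(s) = s - μ (v_proj - c)`, where `v_proj` is the metric projection of
`c + s/μ` onto the closed ball of radius `r` centered at the origin. -/
theorem prox_of_dual_ball_term (H : Type*) [NormedAddCommGroup H]
    [InnerProductSpace ℝ H] [FiniteDimensional ℝ H]
    (s c : H) (r μ : ℝ) (hr : 0 ≤ r) (hμ : 0 < μ)
    (q : H → ℝ) (hq : q = fun u => r * ‖u‖ - ⟪u, c⟫)
    (v : H)
    (hv : v = if ‖c + μ⁻¹ • s‖ ≤ r then c + μ⁻¹ • s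
      else (r / ‖c + μ⁻¹ • s‖) • (c + μ⁻¹ • s)) :
    ∀ u : H, u ≠ s - μ • (v - c) →
      (1 / 2) * ‖(s - μ • (v - c)) - s‖ ^ 2 + μ * q (s - μ • (v - c))
        < (1 / 2) * ‖u - s‖ ^ 2 + μ * q u := by
  intro u hu
  set w : H := c + μ⁻¹ • s with hw
  set u' : H := s - μ • (v - c) with hu'
  have hμ0 : μ ≠ 0 := ne_of_gt hμ
  -- ‖v‖ ≤ r
  have hvr : ‖v‖ ≤ r := by
    rw [hv]
    split_ifs with h
    · exact h
    · push_neg at h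
      have hwpos : 0 < ‖w‖ := lt_of_le_of_lt hr h
      rw [norm_smul, Real.norm_eq_abs, abs_div, abs_of_nonneg hr,
        abs_of_pos hwpos, div_mul_cancel₀ _ (ne_of_gt hwpos)]
  -- key: ⟪u', v⟫ = r * ‖u'‖
  have hkey : ⟪u', v⟫ = r * ‖u'‖ := by
    by_cases h : ‖w‖ ≤ r
    · have hveq : v = w := by rw [hv, if_pos h]
      have hu0 : u' = 0 := by
        rw [hu', hveq, hw]
        have : μ • (c + μ⁻¹ • s - c) = s := by
          rw [add_sub_cancel_left, smul_inv_smul₀ hμ0]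
        rw [this, sub_self]
      rw [hu0, inner_zero_left, norm_zero, mul_zero]
    · push_neg at h
      have hwpos : 0 < ‖w‖ := lt_of_le_of_lt hr h
      have hveq : v = (r / ‖w‖) • w := by rw [hv, if_neg (not_le.mpr h)]
      have hueq : u' = (μ * (1 - r / ‖w‖)) • w := by
        rw [hu', hveq]
        rw [smul_sub, smul_smul]
        have hsw : μ • w = s + μ • c := by
          rw [hw, smul_add, smul_inv_smul₀ hμ0, add_comm]
        rw [mul_sub, mul_one, sub_smul, hsw]
        module
      have hcoef : 0 ≤ μ * (1 - r / ‖w‖) := by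
        apply mul_nonneg hμ.le
        rw [sub_nonneg, div_le_one hwpos]
        exact h.le
      rw [hueq, hveq, real_inner_smul_left, real_inner_smul_right,
        real_inner_self_eq_norm_sq, norm_smul, Real.norm_eq_abs,
        abs_of_nonneg hcoef]
      field_simp
  -- Cauchy-Schwarz bound
  have hcs : ⟪u, v⟫ ≤ r * ‖u‖ := by
    calc ⟪u, v⟫ ≤ ‖u‖ * ‖v‖ := real_inner_le_norm u v
    _ ≤ ‖u‖ * r := mul_le_mul_of_nonneg_left hvr (norm_nonneg u)
    _ = r * ‖u‖ := mul_comm _ _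
  -- positivity
  have hpos : 0 < ‖u - u'‖ ^ 2 := by
    have h0 : 0 < ‖u - u'‖ := norm_pos_iff.mpr (sub_ne_zero.mpr hu)
    exact pow_pos h0 2
  -- norm expansion
  have h1 : ‖u - s‖ ^ 2
      = ‖u - u'‖ ^ 2 - 2 * (μ * (⟪u - u', v⟫ - ⟪u - u', c⟫)) + ‖u' - s‖ ^ 2 := by
    have e1 : u - s = (u - u') - μ • (v - c) := by rw [hu']; abel
    have e2 : u' - s = -(μ • (v - c)) := by rw [hu']; abel
    rw [e1, e2, norm_neg, @norm_sub_sq_real, real_inner_smul_right, inner_sub_right]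
  have h2 : ⟪u - u', c⟫ = ⟪u, c⟫ - ⟪u', c⟫ := inner_sub_left u u' c
  have h3 : ⟪u - u', v⟫ = ⟪u, v⟫ - ⟪u', v⟫ := inner_sub_left u u' v
  rw [hq]
  simp only []
  have hA : μ * ⟪u, v⟫ ≤ μ * (r * ‖u‖) :=
    mul_le_mul_of_nonneg_left hcs hμ.le
  nlinarith [hkey, hpos, hA, h1, h2, h3]
end
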